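/- arXiv:2407.01835 — 4 statements merged into one kernel-verified Lean document; each statement's English description precedes it below -/
import Mathlib

section
/- Every finite subset A of the nonzero integers has an ordering a_1, ..., a_{|A|} of its elements such that the partial sums a_1, a_1+a_2, ..., a_1+...+a_{|A|} are pairwise distinct. -/
/-- The partial sums a₁, a₁+a₂, ..., a₁+⋯+aₙ of the list are pairwise distinct. -/
def ValidOrdering {G : Type*} [AddCommGroup G] (l : List G) : Prop :=
  ((List.range l.length).map (fun i => (l.take (i + 1)).sum)).Nodup

/-- `l` is an ordering (an enumeration without repetition) of the finite set `A`. -/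
def IsOrderingOf {G : Type*} [AddCommGroup G] (l : List G) (A : Finset G) : Prop :=
  l.Nodup ∧ ∀ a, a ∈ l ↔ a ∈ A

namespace GrahamAux

def ps : List ℤ → List ℤ
  | [] => []
  | a :: l => a :: (ps l).map (a + ·)

lemma ps_nil : ps [] = [] := rfl
lemma ps_cons (a : ℤ) (l : List ℤ) : ps (a :: l) = a :: (ps l).map (a + ·) := rfl

lemma validOrdering_iff (l : List ℤ) : ValidOrdering l ↔ (ps l).Nodup := by
  have h : ∀ l : List ℤ, (List.range l.length).map (fun i => (l.take (i+1)).sum) = ps l := by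
    intro l
    induction l with
    | nil => simp [ps]
    | cons a t ih =>
      rw [List.length_cons, List.range_succ_eq_map, List.map_cons, List.map_map, ps_cons, ← ih,
        List.map_map]
      congr 1
      simp
  rw [ValidOrdering, h]

lemma ps_append (l₁ l₂ : List ℤ) : ps (l₁ ++ l₂) = ps l₁ ++ (ps l₂).map (l₁.sum + ·) := by
  induction l₁ with
  | nil => simp [ps]
  | cons a t ih =>
    rw [List.cons_append, ps_cons, ih, List.map_append, List.map_map, ps_cons, List.cons_append]
    congr 2
    apply List.map_congr_left
    intro s _
    simp [Function.comp, add_assoc]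

lemma ps_mem_bounds {l : List ℤ} (hl : ∀ a ∈ l, 0 < a) : ∀ s ∈ ps l, 0 < s ∧ s ≤ l.sum := by
  induction l with
  | nil => simp [ps]
  | cons a t ih =>
    intro s hs
    rw [ps_cons] at hs
    have ha : 0 < a := hl a (by simp)
    have ht : ∀ x ∈ t, 0 < x := fun x hx => hl x (by simp [hx])
    have htsum : 0 ≤ t.sum := List.sum_nonneg (fun x hx => (ht x hx).le)
    rcases List.mem_cons.mp hs with rfl | hs'
    · exact ⟨ha, by simp [List.sum_cons]; linarith⟩
    · rcases List.mem_map.mp hs' with ⟨s', hmem, rfl⟩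
      have h2 := ih ht s' hmem
      constructor
      · have := h2.1; linarith
      · have := h2.2; simp only [List.sum_cons]; linarith

lemma ps_pairwise {l : List ℤ} (hl : ∀ a ∈ l, 0 < a) : (ps l).Pairwise (· < ·) := by
  induction l with
  | nil => simp [ps]
  | cons a t ih =>
    have ht : ∀ x ∈ t, 0 < x := fun x hx => hl x (by simp [hx])
    rw [ps_cons]
    refine List.pairwise_cons.mpr ⟨?_, ?_⟩
    · intro b hb
      rcases List.mem_map.mp hb with ⟨s, hs, rfl⟩
      have := (ps_mem_bounds ht s hs).1
      simp; linarith
    · exact (ih ht).map _ (fun hab => by simpa using hab)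

lemma sum_mem_ps : ∀ {l : List ℤ}, l ≠ [] → l.sum ∈ ps l := by
  intro l
  induction l with
  | nil => simp
  | cons a t ih =>
    intro _
    rw [ps_cons]
    rcases eq_or_ne t [] with rfl | hne
    · simp [ps]
    · exact List.mem_cons_of_mem _ (List.mem_map.mpr ⟨_, ih hne, by simp [List.sum_cons]⟩)

lemma ps_map_neg (l : List ℤ) : ps (l.map (fun a => -a)) = (ps l).map (fun s => -s) := by
  induction l with
  | nil => rfl
  | cons a t ih =>
    rw [List.map_cons, ps_cons, ih, ps_cons, List.map_cons, List.map_map, List.map_map]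
    congr 1
    apply List.map_congr_left
    intro s _
    simp [Function.comp]
    ring

lemma sub_mem_ps_reverse (l : List ℤ) : ∀ s ∈ ps l, l.sum - s = 0 ∨ l.sum - s ∈ ps l.reverse := by
  induction l with
  | nil => simp [ps]
  | cons a t ih =>
    intro s hs
    rw [ps_cons] at hs
    have hrev : ps (a :: t).reverse = ps t.reverse ++ [t.sum + a] := by
      rw [List.reverse_cons, ps_append]
      simp [ps, List.sum_reverse]
    rcases List.mem_cons.mp hs with hsa | hs'
    · rw [hsa]
      rcases eq_or_ne t [] with rfl | hne
      · left; simp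
      · right
        rw [hrev]
        refine List.mem_append_left _ ?_
        rw [show (a :: t).sum - a = t.reverse.sum by
          simp [List.sum_cons, List.sum_reverse]]
        exact sum_mem_ps (by simpa using hne)
    · rcases List.mem_map.mp hs' with ⟨s', hmem, rfl⟩
      have h := ih s' hmem
      have he : (a :: t).sum - (a + s') = t.sum - s' := by simp [List.sum_cons]
      rw [he, hrev]
      rcases h with h | h
      · left; exact h
      · right; exact List.mem_append_left _ h

lemma sum_eq_finset_sum {l : List ℤ} {X : Finset ℤ} (h1 : l.Nodup) (h2 : ∀ a, a ∈ l ↔ a ∈ X) :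
    l.sum = ∑ x ∈ X, x := by
  have hX : l.toFinset = X := Finset.ext fun a => by simp [h2 a]
  rw [← hX, List.sum_toFinset _ h1]
  simp


lemma pick_ne {X : Finset ℤ} (hX : X.Nonempty) {d : ℤ} (hd : d ≠ 0) :
    ∃ x ∈ X, x ≠ (∑ x ∈ X, x) - d := by
  rcases lt_or_ge 1 X.card with h | h
  · obtain ⟨a, ha, b, hb, hab⟩ := Finset.one_lt_card.mp h
    by_cases hc : a = (∑ x ∈ X, x) - d
    · exact ⟨b, hb, by rw [← hc]; exact fun hh => hab hh.symm⟩
    · exact ⟨a, ha, hc⟩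
  · have h1 : X.card = 1 := le_antisymm h (Finset.card_pos.mpr hX)
    obtain ⟨x, rfl⟩ := Finset.card_eq_one.mp h1
    refine ⟨x, Finset.mem_singleton_self x, ?_⟩
    rw [Finset.sum_singleton]
    omega

lemma lemR : ∀ n (X Y : Finset ℤ), X.card + Y.card ≤ n →
    (∀ x ∈ X, 0 < x) → (∀ y ∈ Y, 0 < y) → (∑ x ∈ X, x) ≠ (∑ y ∈ Y, y) →
    ∃ u v : List ℤ, (u.Nodup ∧ ∀ a, a ∈ u ↔ a ∈ X) ∧ (v.Nodup ∧ ∀ a, a ∈ v ↔ a ∈ Y) ∧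
      ∀ s ∈ ps u, s ∉ ps v := by
  intro n
  induction n with
  | zero =>
    intro X Y hcard _ _ _
    have hX : X = ∅ := Finset.card_eq_zero.mp (by omega)
    refine ⟨[], Y.toList, ⟨List.nodup_nil, fun a => by simp [hX]⟩,
      ⟨Y.nodup_toList, fun a => by simp⟩, by simp [ps]⟩
  | succ n IH =>
    intro X Y hcard hXpos hYpos hne
    by_cases hY0 : Y = ∅
    · exact ⟨X.toList, [], ⟨X.nodup_toList, fun a => by simp⟩,
        ⟨List.nodup_nil, fun a => by simp [hY0]⟩, by simp [ps]⟩
    by_cases hX0 : X = ∅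
    · exact ⟨[], Y.toList, ⟨List.nodup_nil, fun a => by simp [hX0]⟩,
        ⟨Y.nodup_toList, fun a => by simp⟩, by simp [ps]⟩
    have hXne : X.Nonempty := Finset.nonempty_iff_ne_empty.mpr hX0
    have hYne : Y.Nonempty := Finset.nonempty_iff_ne_empty.mpr hY0
    have hXsum : 0 < ∑ x ∈ X, x := Finset.sum_pos hXpos hXne
    have hYsum : 0 < ∑ y ∈ Y, y := Finset.sum_pos hYpos hYne
    rcases hne.lt_or_gt with hlt | hgt
    · -- ΣX < ΣY : recurse on Y
      obtain ⟨y, hyY, hyne⟩ := pick_ne hYne (d := ∑ x ∈ X, x) (by omega)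
      set Y' := Y.erase y with hY'
      have hsum' : (∑ z ∈ Y', z) + y = ∑ z ∈ Y, z := Finset.sum_erase_add Y _ hyY
      have hcard' : X.card + Y'.card ≤ n := by
        have hYce : Y'.card = Y.card - 1 := by
          rw [hY']; exact Finset.card_erase_of_mem hyY
        have hYc : 1 ≤ Y.card := Finset.card_pos.mpr hYne
        omega
      have hne' : (∑ x ∈ X, x) ≠ (∑ z ∈ Y', z) := by
        intro h
        apply hyne
        rw [← hsum', ← h]
        ring
      obtain ⟨u, v', ⟨hund, humem⟩, ⟨hvnd, hvmem⟩, hdisj⟩ :=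
        IH X Y' hcard' hXpos (fun z hz => hYpos z (Finset.mem_of_mem_erase hz)) hne'
      refine ⟨u, v' ++ [y], ⟨hund, humem⟩, ⟨?_, ?_⟩, ?_⟩
      · rw [List.nodup_append]
        refine ⟨hvnd, List.nodup_singleton y, ?_⟩
        intro a ha b hay hab
        rw [List.mem_singleton] at hay
        rw [hay] at hab
        subst hab
        exact (Finset.notMem_erase a Y) ((hvmem a).mp ha)
      · intro a
        rw [List.mem_append, List.mem_singleton, hvmem a, hY', Finset.mem_erase]
        constructor
        · rintro (⟨_, h⟩ | rfl) <;> assumption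
        · intro haY
          by_cases hay : a = y
          · right; exact hay
          · left; exact ⟨hay, haY⟩
      · have hv'sum : v'.sum = ∑ z ∈ Y', z := sum_eq_finset_sum hvnd hvmem
        have hpsv : ps (v' ++ [y]) = ps v' ++ [∑ z ∈ Y, z] := by
          rw [ps_append]
          simp [ps, hv'sum]
          omega
        intro s hs
        rw [hpsv, List.mem_append, List.mem_singleton]
        push_neg
        refine ⟨hdisj s hs, ?_⟩
        have husum : u.sum = ∑ x ∈ X, x := sum_eq_finset_sum hund humem
        have := (ps_mem_bounds (fun a ha => hXpos a ((humem a).mp ha)) s hs).2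
        omega
    · -- ΣY < ΣX : recurse on X
      obtain ⟨x, hxX, hxne⟩ := pick_ne hXne (d := ∑ y ∈ Y, y) (by omega)
      set X' := X.erase x with hX'
      have hsum' : (∑ z ∈ X', z) + x = ∑ z ∈ X, z := Finset.sum_erase_add X _ hxX
      have hcard' : X'.card + Y.card ≤ n := by
        have hXce : X'.card = X.card - 1 := by
          rw [hX']; exact Finset.card_erase_of_mem hxX
        have hXc : 1 ≤ X.card := Finset.card_pos.mpr hXne
        omega
      have hne' : (∑ z ∈ X', z) ≠ (∑ y ∈ Y, y) := by
        intro h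
        apply hxne
        rw [← hsum', h]
        ring
      obtain ⟨u', v, ⟨hund, humem⟩, ⟨hvnd, hvmem⟩, hdisj⟩ :=
        IH X' Y hcard' (fun z hz => hXpos z (Finset.mem_of_mem_erase hz)) hYpos hne'
      refine ⟨u' ++ [x], v, ⟨?_, ?_⟩, ⟨hvnd, hvmem⟩, ?_⟩
      · rw [List.nodup_append]
        refine ⟨hund, List.nodup_singleton x, ?_⟩
        intro a ha b hax hab
        rw [List.mem_singleton] at hax
        rw [hax] at hab
        subst hab
        exact (Finset.notMem_erase a X) ((humem a).mp ha)
      · intro a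
        rw [List.mem_append, List.mem_singleton, humem a, hX', Finset.mem_erase]
        constructor
        · rintro (⟨_, h⟩ | rfl) <;> assumption
        · intro haX
          by_cases hax : a = x
          · right; exact hax
          · left; exact ⟨hax, haX⟩
      · have hu'sum : u'.sum = ∑ z ∈ X', z := sum_eq_finset_sum hund humem
        have hpsu : ps (u' ++ [x]) = ps u' ++ [∑ z ∈ X, z] := by
          rw [ps_append]
          simp [ps, hu'sum]
          omega
        intro s hs
        rw [hpsu, List.mem_append, List.mem_singleton] at hs
        rcases hs with hs | rfl
        · exact hdisj s hs
        · intro hmem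
          have hvsum : v.sum = ∑ y ∈ Y, y := sum_eq_finset_sum hvnd hvmem
          have := (ps_mem_bounds (fun a ha => hYpos a ((hvmem a).mp ha)) _ hmem).2
          omega

end GrahamAux

open GrahamAux in
theorem graham_integers (A : Finset ℤ) (hA : (0 : ℤ) ∉ A) :
    ∃ l : List ℤ, IsOrderingOf l A ∧ ValidOrdering l := by
  classical
  set P := A.filter (fun a => 0 < a) with hPdef
  set N := A.filter (fun a => a < 0) with hNdef
  set Y := N.image (fun a => -a) with hYdef
  have hPpos : ∀ x ∈ P, 0 < x := by
    intro x hx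
    rw [hPdef, Finset.mem_filter] at hx
    exact hx.2
  have hYpos : ∀ y ∈ Y, 0 < y := by
    intro y hy
    rw [hYdef, Finset.mem_image] at hy
    obtain ⟨a, ha, rfl⟩ := hy
    rw [hNdef, Finset.mem_filter] at ha
    linarith [ha.2]
  have key : ∃ lp lv : List ℤ,
      (lp.Nodup ∧ ∀ a, a ∈ lp ↔ a ∈ P) ∧ (lv.Nodup ∧ ∀ a, a ∈ lv ↔ a ∈ Y) ∧
      ∀ s ∈ ps lp, ∀ q ∈ ps lv, s ≠ lp.sum - q := by
    by_cases hY0 : Y = ∅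
    · refine ⟨P.toList, [], ⟨P.nodup_toList, fun a => by simp⟩,
        ⟨List.nodup_nil, fun a => by simp [hY0]⟩, ?_⟩
      intro s _ q hq
      simp [ps] at hq
    have hYne : Y.Nonempty := Finset.nonempty_iff_ne_empty.mpr hY0
    have hYsum : 0 < ∑ y ∈ Y, y := Finset.sum_pos hYpos hYne
    by_cases hP1 : P.card ≤ 1
    · refine ⟨P.toList, Y.toList, ⟨P.nodup_toList, fun a => by simp⟩,
        ⟨Y.nodup_toList, fun a => by simp⟩, ?_⟩
      intro s hs q hq
      have hq0 : 0 < q := (ps_mem_bounds (fun a ha => hYpos a (by simpa using ha)) q hq).1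
      rcases Nat.le_one_iff_eq_zero_or_eq_one.mp hP1 with h0 | h1
      · have hPe : P = ∅ := Finset.card_eq_zero.mp h0
        rw [hPe] at hs
        simp [ps] at hs
      · obtain ⟨x, hx⟩ := Finset.card_eq_one.mp h1
        have htl : P.toList = [x] := by rw [hx, Finset.toList_singleton]
        rw [htl] at hs ⊢
        simp [ps] at hs
        subst hs
        simp only [List.sum_cons, List.sum_nil, add_zero]
        omega
    · push_neg at hP1
      have hPne : P.Nonempty := Finset.card_pos.mp (by omega)
      obtain ⟨x, hxP, hxne⟩ := pick_ne hPne (d := ∑ y ∈ Y, y) (by omega)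
      set P' := P.erase x with hP'
      have hsum' : (∑ z ∈ P', z) + x = ∑ z ∈ P, z := Finset.sum_erase_add P _ hxP
      have hne' : (∑ z ∈ P', z) ≠ (∑ y ∈ Y, y) := by
        intro h
        apply hxne
        rw [← hsum', h]
        ring
      obtain ⟨u', v, ⟨hund, humem⟩, ⟨hvnd, hvmem⟩, hdisj⟩ :=
        lemR (P'.card + Y.card) P' Y le_rfl
          (fun z hz => hPpos z (Finset.mem_of_mem_erase hz)) hYpos hne'
      have hxu' : x ∉ u' := fun h => (Finset.notMem_erase x P) ((humem x).mp h)
      have hund2 : (u' ++ [x]).Nodup := by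
        rw [List.nodup_append]
        refine ⟨hund, List.nodup_singleton x, ?_⟩
        intro a ha b hax hab
        rw [List.mem_singleton] at hax
        rw [hax] at hab
        subst hab
        exact hxu' ha
      have hmem2 : ∀ a, a ∈ u' ++ [x] ↔ a ∈ P := by
        intro a
        rw [List.mem_append, List.mem_singleton, humem a, hP', Finset.mem_erase]
        constructor
        · rintro (⟨_, h⟩ | rfl) <;> assumption
        · intro haP
          by_cases hax : a = x
          · right; exact hax
          · left; exact ⟨hax, haP⟩
      have hu'sum : u'.sum = ∑ z ∈ P', z := sum_eq_finset_sum hund humem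
      have hlpsum : (u' ++ [x]).reverse.sum = ∑ z ∈ P, z := by
        rw [List.sum_reverse, List.sum_append, hu'sum]
        simpa using hsum'
      refine ⟨(u' ++ [x]).reverse, v,
        ⟨List.nodup_reverse.mpr hund2, fun a => by rw [List.mem_reverse]; exact hmem2 a⟩,
        ⟨hvnd, hvmem⟩, ?_⟩
      intro s hs q hq heq
      have hq0 : 0 < q := (ps_mem_bounds (fun a ha => hYpos a ((hvmem a).mp ha)) q hq).1
      have hs0 : 0 < s := by
        refine (ps_mem_bounds ?_ s hs).1
        intro a ha
        rw [List.mem_reverse] at ha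
        exact hPpos a ((hmem2 a).mp ha)
      have hsub := sub_mem_ps_reverse ((u' ++ [x]).reverse) s hs
      rw [List.reverse_reverse] at hsub
      have hqeq : (u' ++ [x]).reverse.sum - s = q := by omega
      rw [hqeq] at hsub
      have hpsapp : ps (u' ++ [x]) = ps u' ++ [u'.sum + x] := by
        rw [ps_append]
        simp [ps]
      rcases hsub with h | h
      · omega
      · rw [hpsapp, List.mem_append, List.mem_singleton] at h
        rcases h with h | h
        · exact hdisj q h hq
        · rw [hu'sum] at h
          rw [hlpsum] at heq hqeq
          omega
  obtain ⟨lp, lv, ⟨hlpnd, hlpmem⟩, ⟨hlvnd, hlvmem⟩, hcross⟩ := key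
  have hlppos : ∀ a ∈ lp, 0 < a := fun a ha => hPpos a ((hlpmem a).mp ha)
  have hlvpos : ∀ a ∈ lv, 0 < a := fun a ha => hYpos a ((hlvmem a).mp ha)
  refine ⟨lp ++ lv.map (fun a => -a), ⟨?_, ?_⟩, ?_⟩
  · rw [List.nodup_append]
    refine ⟨hlpnd, hlvnd.map neg_injective, ?_⟩
    intro a ha c hb hac
    rcases List.mem_map.mp hb with ⟨b, hbv, rfl⟩
    have h1 := hlppos _ ha
    have h2 := hlvpos _ hbv
    linarith
  · intro a
    rw [List.mem_append]
    constructor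
    · rintro (h | h)
      · have := (hlpmem a).mp h
        rw [hPdef, Finset.mem_filter] at this
        exact this.1
      · rcases List.mem_map.mp h with ⟨b, hb, rfl⟩
        have hbY := (hlvmem b).mp hb
        rw [hYdef, Finset.mem_image] at hbY
        obtain ⟨c, hc, rfl⟩ := hbY
        rw [hNdef, Finset.mem_filter] at hc
        simpa using hc.1
    · intro haA
      have hane : a ≠ 0 := fun h => hA (h ▸ haA)
      rcases hane.lt_or_gt with hneg | hpos
      · right
        refine List.mem_map.mpr ⟨-a, ?_, by ring⟩
        refine (hlvmem (-a)).mpr ?_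
        rw [hYdef, Finset.mem_image]
        exact ⟨a, by rw [hNdef, Finset.mem_filter]; exact ⟨haA, hneg⟩, rfl⟩
      · left
        exact (hlpmem a).mpr (by rw [hPdef, Finset.mem_filter]; exact ⟨haA, hpos⟩)
  · rw [validOrdering_iff, ps_append, ps_map_neg]
    have hmapeq : ((ps lv).map (fun s => -s)).map (lp.sum + ·) =
        (ps lv).map (fun q => lp.sum - q) := by
      rw [List.map_map]
      apply List.map_congr_left
      intro q _
      simp [Function.comp]
      ring
    rw [hmapeq, List.nodup_append]
    refine ⟨?_, ?_, ?_⟩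
    · exact (ps_pairwise hlppos).imp ne_of_lt
    · refine ((ps_pairwise hlvpos).map _ ?_)
      intro hab
      · omega
    · intro a ha c hb hac
      rcases List.mem_map.mp hb with ⟨q, hq, heq⟩
      exact hcross a ha q hq (hac.trans heq.symm)
end

section
/- Every finite subset A of the nonzero integers has a valid ordering in which all positive elements of A appear before all negative elements of A. -/
def psums (l : List ℤ) : List ℤ :=
  (List.range l.length).map (fun i => (l.take (i + 1)).sum)

lemma psums_cons (x : ℤ) (l : List ℤ) :
    psums (x :: l) = x :: (psums l).map (x + ·) := by
  simp [psums, List.range_succ_eq_map, List.map_map, Function.comp]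

lemma psums_concat (l : List ℤ) (x : ℤ) :
    psums (l ++ [x]) = psums l ++ [l.sum + x] := by
  simp only [psums, List.length_append, List.length_singleton, List.range_succ,
    List.map_append, List.map_cons, List.map_nil]
  congr 1
  · apply List.map_congr_left
    intro i hi
    rw [List.take_append_of_le_length (by simpa using Nat.succ_le_of_lt (List.mem_range.mp hi))]
  · rw [List.take_of_length_le (by simp)]
    simp

lemma sum_of_ordering {l : List ℤ} {A : Finset ℤ} (h1 : l.Nodup)
    (h2 : ∀ a, a ∈ l ↔ a ∈ A) : l.sum = A.sum id := by
  have ht : l.toFinset = A := by ext a; simp [h2 a]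
  have h := List.sum_toFinset (id : ℤ → ℤ) h1
  rw [ht, List.map_id] at h
  exact h.symm

def St (A : Finset ℤ) : Prop :=
  ∃ lp ln : List ℤ,
    (lp ++ ln).Nodup ∧ (∀ a, a ∈ lp ++ ln ↔ a ∈ A) ∧
    (∀ a ∈ lp, 0 < a) ∧ (∀ a ∈ ln, a < 0) ∧
    (psums (lp ++ ln)).Nodup ∧
    ((0:ℤ) ∈ psums (lp ++ ln) → A.sum id = 0) ∧
    (∀ s ∈ psums (lp ++ ln), min (A.sum id) 1 ≤ s)

lemma st_singleton (t : ℤ) (ht : t ≠ 0) : St {t} := by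
  have hsum : ({t} : Finset ℤ).sum id = t := by simp
  have hps : psums [t] = [t] := by simp [psums]
  rcases lt_or_gt_of_ne ht with h | h
  · refine ⟨[], [t], ?_, ?_, ?_, ?_, ?_, ?_, ?_⟩ <;>
      simp_all [psums, min_le_left]
  · refine ⟨[t], [], ?_, ?_, ?_, ?_, ?_, ?_, ?_⟩ <;>
      simp_all [psums, min_le_left]

lemma key (A : Finset ℤ) : (0:ℤ) ∉ A → St A := by
  induction A using Finset.strongInduction with
  | _ A ih =>
  intro hA
  rcases eq_or_ne A ∅ with rfl | hAne
  · exact ⟨[], [], by simp [psums], by simp, by simp, by simp, by simp [psums], by simp [psums],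
      by simp [psums]⟩
  have hAne' : A.Nonempty := Finset.nonempty_iff_ne_empty.mpr hAne
  by_cases hT : 0 < A.sum id
  · -- T > 0 : prepend a positive x ≠ T, or A = {T}
    by_cases hx : ∃ x ∈ A, 0 < x ∧ x ≠ A.sum id
    · obtain ⟨x, hxA, hxpos, hxT⟩ := hx
      obtain ⟨lp', ln', h1, h2, h3, h4, h5, h6, h7⟩ :=
        ih (A.erase x) (Finset.erase_ssubset hxA) (fun h => hA (Finset.mem_of_mem_erase h))
      have hsum' : (lp' ++ ln').sum = (A.erase x).sum id := sum_of_ordering h1 h2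
      have hTer : (A.erase x).sum id = A.sum id - x := by
        have := Finset.sum_erase_add A id hxA
        simp only [id] at this ⊢
        omega
      have hxnot : x ∉ lp' ++ ln' := fun h => by
        have := (h2 x).mp h
        simp at this
      refine ⟨x :: lp', ln', ?_, ?_, ?_, h4, ?_, ?_, ?_⟩
      · rw [List.cons_append, List.nodup_cons]
        exact ⟨hxnot, h1⟩
      · intro a
        rw [List.cons_append, List.mem_cons, h2, Finset.mem_erase]
        by_cases hax : a = x <;> simp [hax, hxA]
      · intro a ha
        rcases List.mem_cons.mp ha with rfl | ha
        · exact hxpos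
        · exact h3 a ha
      · rw [List.cons_append, psums_cons, List.nodup_cons]
        constructor
        · intro hmem
          obtain ⟨s, hs, hxs⟩ := List.mem_map.mp hmem
          have hs0 : s = 0 := by omega
          have := h6 (hs0 ▸ hs)
          omega
        · exact h5.map (add_right_injective x)
      · rw [List.cons_append, psums_cons]
        intro h0
        rcases List.mem_cons.mp h0 with h0 | h0
        · omega
        · obtain ⟨s, hs, hxs⟩ := List.mem_map.mp h0
          have := h7 s hs
          omega
      · rw [List.cons_append, psums_cons]
        intro s hs
        rcases List.mem_cons.mp hs with rfl | hs
        · omega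
        · obtain ⟨s', hs', rfl⟩ := List.mem_map.mp hs
          have := h7 s' hs'
          omega
    · -- all positives equal A.sum, so A = {A.sum id}
      push_neg at hx
      have hpos : ∃ p ∈ A, 0 < p := by
        by_contra hc
        push_neg at hc
        have : A.sum id < 0 := by
          apply Finset.sum_neg (fun i hi => ?_) hAne'
          have h1 := hc i hi
          have h2 : i ≠ 0 := fun h => hA (h ▸ hi)
          simp only [id]
          omega
        omega
      obtain ⟨p, hpA, hp⟩ := hpos
      have hpT : p = A.sum id := hx p hpA hp
      have hAeq : A = {A.sum id} := by
        have hfilter : A.filter (fun a => 0 < a) = {A.sum id} := by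
          apply Finset.eq_singleton_iff_nonempty_unique_mem.mpr
          refine ⟨⟨p, Finset.mem_filter.mpr ⟨hpA, hp⟩⟩, ?_⟩
          intro y hy
          obtain ⟨hyA, hy0⟩ := Finset.mem_filter.mp hy
          exact hx y hyA hy0
        have hsplit : (A.filter (fun a => 0 < a)).sum id + (A.filter (fun a => ¬ 0 < a)).sum id
            = A.sum id := Finset.sum_filter_add_sum_filter_not A (fun a => 0 < a) id
        rw [hfilter, Finset.sum_singleton, id_eq] at hsplit
        have hnegempty : A.filter (fun a => ¬ 0 < a) = ∅ := by
          by_contra hne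
          have hnonempty : (A.filter (fun a => ¬ 0 < a)).Nonempty :=
            Finset.nonempty_iff_ne_empty.mpr hne
          have : (A.filter (fun a => ¬ 0 < a)).sum id < 0 := by
            apply Finset.sum_neg (fun i hi => ?_) hnonempty
            obtain ⟨hiA, hi0⟩ := Finset.mem_filter.mp hi
            have : i ≠ 0 := fun h => hA (h ▸ hiA)
            simp only [id]
            omega
          omega
        have := Finset.filter_union_filter_not_eq (fun a => 0 < a) A
        rw [hfilter, hnegempty] at this
        simp at this
        exact this.symm
      rw [hAeq]
      exact st_singleton _ (by omega)
  · -- T ≤ 0 : append a negative x ≠ T, or A = {T}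
    push_neg at hT
    by_cases hx : ∃ x ∈ A, x < 0 ∧ x ≠ A.sum id
    · obtain ⟨x, hxA, hxneg, hxT⟩ := hx
      obtain ⟨lp', ln', h1, h2, h3, h4, h5, h6, h7⟩ :=
        ih (A.erase x) (Finset.erase_ssubset hxA) (fun h => hA (Finset.mem_of_mem_erase h))
      have hsum' : (lp' ++ ln').sum = (A.erase x).sum id := sum_of_ordering h1 h2
      have hTer : (A.erase x).sum id = A.sum id - x := by
        have := Finset.sum_erase_add A id hxA
        simp only [id] at this ⊢
        omega
      have hxnot : x ∉ lp' ++ ln' := fun h => by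
        have := (h2 x).mp h
        simp at this
      have hassoc : lp' ++ (ln' ++ [x]) = (lp' ++ ln') ++ [x] := by
        rw [List.append_assoc]
      refine ⟨lp', ln' ++ [x], ?_, ?_, h3, ?_, ?_, ?_, ?_⟩
      · rw [hassoc, List.nodup_append]
        exact ⟨h1, List.nodup_singleton x, fun a ha b hb => by rw [List.mem_singleton] at hb; rw [hb]; rintro rfl; exact hxnot ha⟩
      · intro a
        rw [hassoc, List.mem_append, h2, Finset.mem_erase, List.mem_singleton]
        by_cases hax : a = x <;> simp [hax, hxA]
      · intro a ha
        rcases List.mem_append.mp ha with ha | ha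
        · exact h4 a ha
        · rw [List.mem_singleton] at ha
          omega
      · rw [hassoc, psums_concat, List.nodup_append]
        refine ⟨h5, List.nodup_singleton _, ?_⟩
        intro s hmem b hb hsb
        rw [List.mem_singleton] at hb
        rw [hsb, hb] at hmem
        have := h7 _ hmem
        omega
      · rw [hassoc, psums_concat]
        intro h0
        rcases List.mem_append.mp h0 with h0 | h0
        · have := h6 h0
          omega
        · rw [List.mem_singleton] at h0
          omega
      · rw [hassoc, psums_concat]
        intro s hs
        rcases List.mem_append.mp hs with hs | hs
        · have := h7 s hs
          omega
        · rw [List.mem_singleton] at hs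
          omega
    · push_neg at hx
      have hneg : ∃ p ∈ A, p < 0 := by
        by_contra hc
        push_neg at hc
        have : 0 < A.sum id := by
          apply Finset.sum_pos (fun i hi => ?_) hAne'
          have h1 := hc i hi
          have h2 : i ≠ 0 := fun h => hA (h ▸ hi)
          simp only [id]
          omega
        omega
      obtain ⟨p, hpA, hp⟩ := hneg
      have hpT : p = A.sum id := hx p hpA hp
      have hAeq : A = {A.sum id} := by
        have hfilter : A.filter (fun a => a < 0) = {A.sum id} := by
          apply Finset.eq_singleton_iff_nonempty_unique_mem.mpr
          refine ⟨⟨p, Finset.mem_filter.mpr ⟨hpA, hp⟩⟩, ?_⟩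
          intro y hy
          obtain ⟨hyA, hy0⟩ := Finset.mem_filter.mp hy
          exact hx y hyA hy0
        have hsplit : (A.filter (fun a => a < 0)).sum id + (A.filter (fun a => ¬ a < 0)).sum id
            = A.sum id := Finset.sum_filter_add_sum_filter_not A (fun a => a < 0) id
        rw [hfilter, Finset.sum_singleton, id_eq] at hsplit
        have hposempty : A.filter (fun a => ¬ a < 0) = ∅ := by
          by_contra hne
          have hnonempty : (A.filter (fun a => ¬ a < 0)).Nonempty :=
            Finset.nonempty_iff_ne_empty.mpr hne
          have : 0 < (A.filter (fun a => ¬ a < 0)).sum id := by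
            apply Finset.sum_pos (fun i hi => ?_) hnonempty
            obtain ⟨hiA, hi0⟩ := Finset.mem_filter.mp hi
            have : i ≠ 0 := fun h => hA (h ▸ hiA)
            simp only [id]
            omega
          omega
        have := Finset.filter_union_filter_not_eq (fun a => a < 0) A
        rw [hfilter, hposempty] at this
        simp at this
        exact this.symm
      have hTne : A.sum id ≠ 0 := by
        rw [hAeq] at hpA
        simp at hpA
        omega
      rw [hAeq]
      exact st_singleton _ hTne

theorem graham_integers_pos_before_neg (A : Finset ℤ) (hA : (0 : ℤ) ∉ A) :
    ∃ l : List ℤ, IsOrderingOf l A ∧ ValidOrdering l ∧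
      ∀ (i j : Fin l.length), (i : ℕ) < j → 0 < l.get j → 0 < l.get i := by
  obtain ⟨lp, ln, h1, h2, h3, h4, h5, h6, h7⟩ := key A hA
  refine ⟨lp ++ ln, ⟨h1, h2⟩, h5, ?_⟩
  intro i j hij hj
  have hlt : ∀ k : Fin (lp ++ ln).length, 0 < (lp ++ ln).get k → (k : ℕ) < lp.length := by
    intro k hk
    by_contra hk'
    push_neg at hk'
    have hklen : (k : ℕ) - lp.length < ln.length := by
      have := k.isLt
      simp only [List.length_append] at this
      omega
    have hget : (lp ++ ln).get k = ln[(k : ℕ) - lp.length] := by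
      rw [List.get_eq_getElem, List.getElem_append_right hk']
    have hmem : ln[(k : ℕ) - lp.length] ∈ ln := List.getElem_mem hklen
    have := h4 _ hmem
    rw [hget] at hk
    omega
  have hjlt := hlt j hj
  have hilt : (i : ℕ) < lp.length := lt_trans hij hjlt
  have hget : (lp ++ ln).get i = lp[(i : ℕ)] := by
    rw [List.get_eq_getElem, List.getElem_append_left hilt]
  rw [hget]
  exact h3 _ (List.getElem_mem hilt)
end

section
/- Let P and N be finite sets of positive integers. Then there exist orderings p_1,...,p_{|P|} of P and n_1,...,n_{|N|} of N such that p_1+...+p_i ≠ n_1+...+n_j for all pairs (i,j) with 0 ≤ i ≤ |P|, 0 ≤ j ≤ |N|, except possibly (i,j) = (0,0) and (i,j) = (|P|,|N|). -/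
def Good (P N : Finset ℤ) : Prop :=
  ∃ lp ln : List ℤ, IsOrderingOf lp P ∧ IsOrderingOf ln N ∧
    ∀ i j : ℕ, i ≤ lp.length → j ≤ ln.length →
      ¬(i = 0 ∧ j = 0) → ¬(i = lp.length ∧ j = ln.length) →
      (lp.take i).sum ≠ (ln.take j).sum

lemma good_swap (P N : Finset ℤ) (h : Good P N) : Good N P := by
  obtain ⟨lp, ln, h1, h2, h3⟩ := h
  exact ⟨ln, lp, h2, h1, fun i j hi hj h0 hend =>
    (h3 j i hj hi (by tauto) (by tauto)).symm⟩

lemma ord_toFinset {l : List ℤ} {A : Finset ℤ} (h : IsOrderingOf l A) :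
    l.toFinset = A := by
  ext a; simp [h.2 a]

lemma ord_length {l : List ℤ} {A : Finset ℤ} (h : IsOrderingOf l A) :
    l.length = A.card := by
  rw [← ord_toFinset h, List.toFinset_card_of_nodup h.1]

lemma ord_sum {l : List ℤ} {A : Finset ℤ} (h : IsOrderingOf l A) :
    l.sum = ∑ x ∈ A, x := by
  rw [← ord_toFinset h]
  rw [List.sum_toFinset _ h.1]
  simp

lemma take_sum_pos {l : List ℤ} (hpos : ∀ x ∈ l, 0 < x) {j : ℕ}
    (hj : 0 < j) (hjl : j ≤ l.length) : 0 < (l.take j).sum := by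
  apply List.sum_pos
  · exact fun x hx => hpos x (List.mem_of_mem_take hx)
  · intro hnil
    have := congrArg List.length hnil
    simp [min_eq_left hjl] at this
    omega

lemma take_sum_lt {l : List ℤ} (hpos : ∀ x ∈ l, 0 < x) {i : ℕ}
    (hi : i < l.length) : (l.take i).sum < l.sum := by
  conv_rhs => rw [← List.take_append_drop i l]
  rw [List.sum_append]
  have hdrop : 0 < (l.drop i).sum := by
    apply List.sum_pos
    · exact fun x hx => hpos x (List.mem_of_mem_drop hx)
    · intro hnil
      rw [List.drop_eq_nil_iff] at hnil
      omega
  linarith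

lemma good_empty (N : Finset ℤ) (hN : ∀ x ∈ N, 0 < x) : Good ∅ N := by
  refine ⟨[], N.toList, ⟨List.nodup_nil, by simp⟩,
    ⟨N.nodup_toList, fun a => by simp⟩, ?_⟩
  intro i j hi hj h0 _
  simp only [List.length_nil, Nat.le_zero] at hi
  subst hi
  have hj0 : 0 < j := by omega
  have hpos : 0 < (N.toList.take j).sum :=
    take_sum_pos (fun x hx => hN x (by simpa using hx)) hj0 hj
  simp only [List.take_nil, List.sum_nil]
  omega

lemma good_step (P N : Finset ℤ) (hP : ∀ x ∈ P, 0 < x) (hN : ∀ x ∈ N, 0 < x)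
    (hPne : P.Nonempty) (hle : ∑ x ∈ P, x ≤ ∑ x ∈ N, x)
    (IH : ∀ P' N' : Finset ℤ, P'.card + N'.card < P.card + N.card →
      (∀ x ∈ P', 0 < x) → (∀ x ∈ N', 0 < x) → Good P' N') :
    Good P N := by
  have hsumP : 0 < ∑ x ∈ P, x := Finset.sum_pos hP hPne
  have hNne : N.Nonempty := by
    rcases N.eq_empty_or_nonempty with rfl | h
    · simp at hle; omega
    · exact h
  -- choose n ∈ N with n ≠ ∑N - ∑P
  obtain ⟨n, hnN, hn⟩ : ∃ n ∈ N, n ≠ ∑ x ∈ N, x - ∑ x ∈ P, x := by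
    by_contra hcon
    push_neg at hcon
    have hNsing : N = {∑ x ∈ N, x - ∑ x ∈ P, x} := by
      apply Finset.eq_singleton_iff_nonempty_unique_mem.mpr
      exact ⟨hNne, hcon⟩
    have : ∑ x ∈ N, x = ∑ x ∈ N, x - ∑ x ∈ P, x := by
      conv_lhs => rw [hNsing]
      simp
    omega
  -- recurse on (P, N.erase n)
  have hcard : P.card + (N.erase n).card < P.card + N.card := by
    have := Finset.card_erase_of_mem hnN
    have := Finset.card_pos.mpr hNne
    omega
  obtain ⟨lp, ln', h1, h2, h3⟩ :=
    IH P (N.erase n) hcard hP (fun x hx => hN x (Finset.mem_of_mem_erase hx))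
  have hnotmem : n ∉ ln' := by
    rw [h2.2 n]
    simp
  have hord : IsOrderingOf (ln' ++ [n]) N := by
    constructor
    · rw [List.nodup_append]
      exact ⟨h2.1, List.nodup_singleton n, by
        simp only [List.mem_singleton]; rintro a ha b rfl rfl; exact hnotmem ha⟩
    · intro a
      simp only [List.mem_append, List.mem_singleton, h2.2 a, Finset.mem_erase]
      constructor
      · rintro (⟨_, ha⟩ | rfl) <;> [exact ha; exact hnN]
      · intro ha
        by_cases han : a = n
        · right; exact han
        · left; exact ⟨han, ha⟩
  refine ⟨lp, ln' ++ [n], h1, hord, ?_⟩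
  have hlp : lp.length = P.card := ord_length h1
  have hln' : ln'.length = (N.erase n).card := ord_length h2
  have hlpsum : lp.sum = ∑ x ∈ P, x := ord_sum h1
  have hln'sum : ln'.sum = ∑ x ∈ N.erase n, x := ord_sum h2
  have herase_sum : ∑ x ∈ N.erase n, x + n = ∑ x ∈ N, x :=
    Finset.sum_erase_add N _ hnN
  have hlplen : ∀ x ∈ lp, (0:ℤ) < x := fun x hx => hP x ((h1.2 x).mp hx)
  intro i j hi hj h0 hend
  simp only [List.length_append, List.length_singleton] at hj hend
  by_cases hjcase : j ≤ ln'.length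
  · rw [List.take_append_of_le_length hjcase]
    by_cases hij : i = lp.length ∧ j = ln'.length
    · -- sums are ∑P and ∑(N.erase n), which differ by choice of n
      obtain ⟨hia, hja⟩ := hij
      rw [hia, hja, List.take_length, List.take_length, hlpsum, hln'sum]
      omega
    · exact h3 i j hi hjcase h0 hij
  · -- j = ln'.length + 1, whole list ln' ++ [n]
    have hjeq : j = ln'.length + 1 := by omega
    have : (ln' ++ [n]).take j = ln' ++ [n] := by
      apply List.take_of_length_le
      simp [hjeq]
    rw [this, List.sum_append, List.sum_singleton, hln'sum, herase_sum]
    have hilt : i < lp.length := by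
      rcases Nat.lt_or_ge i lp.length with h | h
      · exact h
      · exfalso; exact hend ⟨by omega, by omega⟩
    have := take_sum_lt hlplen hilt
    rw [hlpsum] at this
    omega

lemma good_main : ∀ k : ℕ, ∀ P N : Finset ℤ, P.card + N.card = k →
    (∀ x ∈ P, 0 < x) → (∀ x ∈ N, 0 < x) → Good P N := by
  intro k
  induction k using Nat.strong_induction_on with
  | _ k IH =>
    intro P N hk hP hN
    rcases P.eq_empty_or_nonempty with rfl | hPne
    · exact good_empty N hN
    rcases N.eq_empty_or_nonempty with rfl | hNne
    · exact good_swap _ _ (good_empty P hP)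
    rcases le_total (∑ x ∈ P, x) (∑ x ∈ N, x) with hle | hle
    · exact good_step P N hP hN hPne hle
        (fun P' N' hlt hP' hN' => IH _ (by omega) P' N' rfl hP' hN')
    · exact good_swap _ _ (good_step N P hN hP hNne hle
        (fun P' N' hlt hP' hN' => IH _ (by omega) P' N' rfl hP' hN'))

theorem partial_sums_avoid (P N : Finset ℤ) (hP : ∀ x ∈ P, 0 < x) (hN : ∀ x ∈ N, 0 < x) :
    ∃ lp ln : List ℤ, IsOrderingOf lp P ∧ IsOrderingOf ln N ∧
      ∀ i j : ℕ, i ≤ lp.length → j ≤ ln.length →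
        ¬(i = 0 ∧ j = 0) → ¬(i = lp.length ∧ j = ln.length) →
        (lp.take i).sum ≠ (ln.take j).sum :=
  good_main (P.card + N.card) P N rfl hP hN
end

section
/- Let A be a finite subset of an abelian group G with 0 ∈ A and |A| = n ≥ 2, let B be a finite subset of another abelian group, and let f : A → B be an (n-1)-Freiman isomorphism with f(0) = 0 that is also a k-Freiman isomorphism for all 1 ≤ k ≤ n-1. If f(A \ {0}) has a valid ordering, then A \ {0} has a valid ordering. -/
/-- `f` is an `ℓ`-Freiman isomorphism from `A` to `B`. -/
def IsFreimanIso {G H : Type*} [AddCommGroup G] [AddCommGroup H]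
    (A : Finset G) (B : Finset H) (ℓ : ℕ) (f : G → H) : Prop :=
  Set.BijOn f A B ∧
    ∀ x y : Fin ℓ → G, (∀ i, x i ∈ A) → (∀ i, y i ∈ A) →
      ((∑ i, x i = ∑ i, y i) ↔ (∑ i, f (x i) = ∑ i, f (y i)))

private lemma sum_getD_eq {G : Type*} [AddCommGroup G] (u : List G) {N : ℕ}
    (h : u.length = N) : ∑ k : Fin N, u.getD k 0 = u.sum := by
  subst h
  rw [← Fin.sum_univ_getElem u]
  refine Finset.sum_congr rfl fun k _ => ?_
  exact List.getD_eq_getElem u 0 k.2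

theorem valid_ordering_pullback {G H : Type*} [AddCommGroup G] [AddCommGroup H]
    [DecidableEq G] [DecidableEq H]
    (A : Finset G) (n : ℕ) (hn : 2 ≤ n) (hcard : A.card = n) (h0 : (0 : G) ∈ A)
    (B : Finset H) (f : G → H) (hf : IsFreimanIso A B (n - 1) f) (hf0 : f 0 = 0)
    (hfk : ∀ k : ℕ, 1 ≤ k → k ≤ n - 1 → IsFreimanIso A B k f)
    (hB : ∃ m : List H, IsOrderingOf m ((A.erase 0).image f) ∧ ValidOrdering m) :
    ∃ l : List G, IsOrderingOf l (A.erase 0) ∧ ValidOrdering l := by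
  obtain ⟨m, ⟨hmnd, hmmem⟩, hmval⟩ := hB
  have hinjA : Set.InjOn f ↑A := hf.1.injOn
  -- the inverse function
  have : Nonempty G := ⟨0⟩
  set g : H → G := Function.invFunOn f ↑A with hg
  have hgf : ∀ a ∈ A, g (f a) = a := by
    intro a ha
    exact hinjA (Function.invFunOn_mem ⟨a, ha, rfl⟩) ha
      (Function.invFunOn_eq (f := f) ⟨a, ha, rfl⟩)
  have hmA : ∀ b ∈ m, ∃ a ∈ A.erase 0, f a = b := by
    intro b hb
    have := (hmmem b).1 hb
    simpa using Finset.mem_image.1 this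
  have hfg : ∀ b ∈ m, f (g b) = b := by
    intro b hb
    obtain ⟨a, ha, rfl⟩ := hmA b hb
    rw [hgf a (Finset.mem_of_mem_erase ha)]
  set l : List G := m.map g with hl
  have hmapfl : l.map f = m := by
    rw [hl, List.map_map]
    exact List.map_congr_left hfg |>.trans (List.map_id m)
  have hlmem : ∀ a, a ∈ l ↔ a ∈ A.erase 0 := by
    intro a
    constructor
    · intro ha
      obtain ⟨b, hb, rfl⟩ := List.mem_map.1 ha
      obtain ⟨a', ha', rfl⟩ := hmA b hb
      rw [hgf a' (Finset.mem_of_mem_erase ha')]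
      exact ha'
    · intro ha
      have hfa : f a ∈ m := (hmmem (f a)).2 (Finset.mem_image_of_mem f ha)
      refine List.mem_map.2 ⟨f a, hfa, hgf a (Finset.mem_of_mem_erase ha)⟩
  have hlnd : l.Nodup := by
    refine hmnd.map_on ?_
    intro x hx y hy hxy
    rw [← hfg x hx, ← hfg y hy, hxy]
  have hllen : l.length = m.length := by rw [hl, List.length_map]
  have hmlen : m.length = n - 1 := by
    have h1 : m.toFinset = (A.erase 0).image f := by
      ext b; simp [hmmem b]
    have h2 : m.toFinset.card = m.length := List.toFinset_card_of_nodup hmnd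
    rw [← h2, h1, Finset.card_image_of_injOn
      (hinjA.mono (by intro x hx; exact Finset.mem_of_mem_erase hx)),
      Finset.card_erase_of_mem h0, hcard]
  have hlA : ∀ a ∈ l, a ∈ A := fun a ha =>
    Finset.mem_of_mem_erase ((hlmem a).1 ha)
  refine ⟨l, ⟨hlnd, hlmem⟩, ?_⟩
  -- Key claim: partial sums with i < j differ
  have key : ∀ i j : ℕ, i < j → j < l.length →
      (l.take (i + 1)).sum ≠ (l.take (j + 1)).sum := by
    intro i j hlt hj hij
    set s : List G := l.take (i + 1) ++ List.replicate (j - i) 0 with hs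
    set t : List G := l.take (j + 1) with ht
    have hslen : s.length = j + 1 := by
      rw [hs, List.length_append, List.length_take, List.length_replicate]
      omega
    have htlen : t.length = j + 1 := by
      rw [ht, List.length_take]; omega
    set x : Fin (j + 1) → G := fun k => s.getD k 0 with hx
    set y : Fin (j + 1) → G := fun k => t.getD k 0 with hy
    have hxA : ∀ k, x k ∈ A := by
      intro k
      have hk : (k : ℕ) < s.length := by rw [hslen]; exact k.2
      rw [hx]
      simp only
      rw [List.getD_eq_getElem s 0 hk]
      have : s[(k:ℕ)] ∈ s := List.getElem_mem hk
      rcases List.mem_append.1 this with h | h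
      · exact hlA _ (List.mem_of_mem_take h)
      · rw [List.eq_of_mem_replicate h]; exact h0
    have hyA : ∀ k, y k ∈ A := by
      intro k
      have hk : (k : ℕ) < t.length := by rw [htlen]; exact k.2
      rw [hy]
      simp only
      rw [List.getD_eq_getElem t 0 hk]
      have : t[(k:ℕ)] ∈ t := List.getElem_mem hk
      exact hlA _ (List.mem_of_mem_take this)
    have hsumx : ∑ k, x k = (l.take (i + 1)).sum := by
      rw [hx]
      rw [sum_getD_eq s hslen, hs, List.sum_append, List.sum_replicate, smul_zero, add_zero]
    have hsumy : ∑ k, y k = (l.take (j + 1)).sum := by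
      rw [hy, sum_getD_eq t htlen]
    have hmapfs : s.map f = m.take (i + 1) ++ List.replicate (j - i) (0 : H) := by
      rw [hs, List.map_append, List.map_take, hmapfl, List.map_replicate, hf0]
    have hmapft : t.map f = m.take (j + 1) := by
      rw [ht, List.map_take, hmapfl]
    have hsumfx : ∑ k, f (x k) = (m.take (i + 1)).sum := by
      have hc : ∀ k : Fin (j + 1), f (x k) = (s.map f).getD k 0 := by
        intro k
        rw [hx]
        simp only
        rw [← hf0, List.getD_map]
      rw [Finset.sum_congr rfl fun k _ => hc k,
        sum_getD_eq _ (by rw [List.length_map, hslen]), hmapfs,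
        List.sum_append, List.sum_replicate, smul_zero, add_zero]
    have hsumfy : ∑ k, f (y k) = (m.take (j + 1)).sum := by
      have hc : ∀ k : Fin (j + 1), f (y k) = (t.map f).getD k 0 := by
        intro k
        rw [hy]
        simp only
        rw [← hf0, List.getD_map]
      rw [Finset.sum_congr rfl fun k _ => hc k,
        sum_getD_eq _ (by rw [List.length_map, htlen]), hmapft]
    have hjn : j + 1 ≤ n - 1 := by
      rw [hllen, hmlen] at hj
      omega
    have hfr := (hfk (j + 1) (by omega) hjn).2 x y hxA hyA
    have heq : ∑ k, f (x k) = ∑ k, f (y k) := by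
      rw [← hfr, hsumx, hsumy]; exact hij
    rw [hsumfx, hsumfy] at heq
    have hmval' := List.inj_on_of_nodup_map (f := fun i => (m.take (i + 1)).sum) hmval
    have hi' : i ∈ List.range m.length := List.mem_range.2 (by rw [← hllen]; omega)
    have hj' : j ∈ List.range m.length := List.mem_range.2 (by rw [← hllen]; omega)
    exact absurd (hmval' hi' hj' heq) (by omega)
  rw [ValidOrdering]
  rw [List.nodup_iff_injective_get]
  rintro ⟨i, hi⟩ ⟨j, hj⟩ hij
  simp only [List.length_map, List.length_range] at hi hj
  rw [List.get_eq_getElem, List.get_eq_getElem, List.getElem_map, List.getElem_map] at hij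
  simp only [List.getElem_range] at hij
  ext
  simp only
  by_contra hne
  rcases Nat.lt_or_ge i j with hlt | hge
  · exact key i j hlt hj hij
  · exact key j i (by omega) hi hij.symm
end
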